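/- Let g : ℝ → ℝ be continuous and convex, let O ⊂ ℝ^M be bounded, open and measurable, and let (vₙ) be a sequence in L¹(O) with vₙ ⇀ v weakly in L¹(O) and g(vₙ) ⇀ w weakly in L¹(O). Then g(v) ≤ w almost everywhere on O. -/

import Mathlib

open MeasureTheory Filter Topology

lemma supp_line (g : ℝ → ℝ) (hg : ConvexOn ℝ Set.univ g) (p : ℝ) :
    ∃ a : ℝ, ∀ t, g p + a * (t - p) ≤ g t := by
  have slope_mono : ∀ {x y z : ℝ}, x < y → y < z →
      (g y - g x) / (y - x) ≤ (g z - g y) / (z - y) :=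
    fun hxy hyz => hg.slope_mono_adjacent trivial trivial hxy hyz
  set S : Set ℝ := (fun t => (g t - g p) / (t - p)) '' Set.Ioi p with hS
  have hne : S.Nonempty := ⟨_, ⟨p + 1, by simp, rfl⟩⟩
  have hbdd : BddBelow S := by
    refine ⟨(g p - g (p - 1)) / (p - (p - 1)), ?_⟩
    rintro _ ⟨t, ht, rfl⟩
    exact slope_mono (by linarith) ht
  refine ⟨sInf S, fun t => ?_⟩
  rcases lt_trichotomy t p with h | h | h
  · have h1 : (g p - g t) / (p - t) ≤ sInf S := by
      refine le_csInf hne ?_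
      rintro _ ⟨s, hs, rfl⟩
      exact slope_mono h hs
    have hpt : (0:ℝ) < p - t := by linarith
    have h2 := (div_le_iff₀ hpt).mp h1
    nlinarith
  · simp [h]
  · have h1 : sInf S ≤ (g t - g p) / (t - p) := csInf_le hbdd ⟨t, h, rfl⟩
    have htp : (0:ℝ) < t - p := by linarith
    have h2 := (le_div_iff₀ htp).mp h1
    nlinarith

lemma sup_lines (g : ℝ → ℝ) (hc : Continuous g)
    (a : ℚ → ℝ) (ha : ∀ q : ℚ, ∀ t, g q + a q * (t - q) ≤ g t)
    (t : ℝ) {ε : ℝ} (hε : 0 < ε) : ∃ q : ℚ, g t - ε < g q + a q * (t - q) := by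
  obtain ⟨δ, hδ, hδ'⟩ := Metric.continuous_iff.mp hc t (ε/2) (by linarith)
  have hC0 : (0:ℝ) < |g (t + 2) - g t| + ε/2 + 1 := by positivity
  set C : ℝ := |g (t + 2) - g t| + ε/2 + 1 with hC
  clear_value C
  have hpos : (0:ℝ) < min (min δ 1) (ε/(2*C)) :=
    lt_min (lt_min hδ one_pos) (div_pos hε (by linarith))
  obtain ⟨q, hq1, hq2⟩ := exists_rat_btwn (show t < t + min (min δ 1) (ε/(2*C)) by linarith)
  refine ⟨q, ?_⟩
  have hq2' : (q:ℝ) - t < min (min δ 1) (ε/(2*C)) := by linarith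
  have hqδ : (q:ℝ) - t < δ := lt_of_lt_of_le hq2' ((min_le_left _ _).trans (min_le_left _ _))
  have hq1' : (q:ℝ) - t < 1 := lt_of_lt_of_le hq2' ((min_le_left _ _).trans (min_le_right _ _))
  have hqε : (q:ℝ) - t < ε/(2*C) := lt_of_lt_of_le hq2' (min_le_right _ _)
  have hgq : |g q - g t| < ε/2 := by
    apply hδ'
    rw [Real.dist_eq, abs_of_pos (by linarith : (0:ℝ) < (q:ℝ) - t)]
    exact hqδ
  have hgq1 : g t - ε/2 < g q := by
    have := abs_lt.mp hgq
    linarith [this.1]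
  have haq : a q ≤ C := by
    rcases le_or_gt (a q) 0 with h | h
    · linarith
    · have h1 := ha q (t + 2)
      have h2 : (1:ℝ) ≤ t + 2 - q := by linarith
      have h3 : a q * 1 ≤ a q * (t + 2 - q) := mul_le_mul_of_nonneg_left h2 h.le
      have h4 : a q ≤ g (t + 2) - g q := by linarith
      have h5 : g (t + 2) - g t ≤ |g (t + 2) - g t| := le_abs_self _
      rw [hC]
      linarith
  have hmul : C * (t - (q:ℝ)) ≤ a q * (t - q) :=
    mul_le_mul_of_nonpos_right haq (by linarith)
  have hCq : C * ((q:ℝ) - t) < ε/2 := by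
    have h6 := (lt_div_iff₀ (by positivity : (0:ℝ) < 2*C)).mp hqε
    ring_nf at h6 ⊢
    linarith
  have h7 : -(C * ((q:ℝ) - t)) ≤ a q * (t - q) := by
    ring_nf at hmul ⊢
    linarith
  linarith

set_option maxHeartbeats 1000000 in
theorem stmt_3 (M : ℕ) (O : Set (Fin M → ℝ))
    (hO_bdd : Bornology.IsBounded O) (hO_open : IsOpen O)
    (g : ℝ → ℝ) (hg_cont : Continuous g) (hg_conv : ConvexOn ℝ Set.univ g)
    (v : ℕ → (Fin M → ℝ) → ℝ) (vlim w : (Fin M → ℝ) → ℝ)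
    (hv_int : ∀ n, IntegrableOn (v n) O)
    (hvlim_int : IntegrableOn vlim O)
    (hgv_int : ∀ n, IntegrableOn (fun x => g (v n x)) O)
    (hw_int : IntegrableOn w O)
    (hv_weak : ∀ φ : (Fin M → ℝ) → ℝ, Measurable φ → (∃ Cφ, ∀ x, |φ x| ≤ Cφ) →
      Tendsto (fun n => ∫ x in O, v n x * φ x) atTop (𝓝 (∫ x in O, vlim x * φ x)))
    (hgv_weak : ∀ φ : (Fin M → ℝ) → ℝ, Measurable φ → (∃ Cφ, ∀ x, |φ x| ≤ Cφ) →
      Tendsto (fun n => ∫ x in O, g (v n x) * φ x) atTop (𝓝 (∫ x in O, w x * φ x))) :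
    ∀ᵐ x ∂(volume.restrict O), g (vlim x) ≤ w x := by
  haveI hfin : IsFiniteMeasure (volume.restrict O) := by
    constructor
    rw [Measure.restrict_apply_univ]
    exact hO_bdd.measure_lt_top
  have line_ae : ∀ (A B : ℝ), (∀ t, A * t + B ≤ g t) →
      ∀ᵐ x ∂(volume.restrict O), A * vlim x + B ≤ w x := by
    intro A B hAB
    have hf : Integrable (fun x => A * vlim x + B) (volume.restrict O) :=
      (hvlim_int.const_mul A).add (integrable_const B)
    refine ae_le_of_forall_setIntegral_le hf hw_int ?_
    intro s hs hsμ
    set φ : (Fin M → ℝ) → ℝ := s.indicator (fun _ => 1) with hφ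
    have hφm : Measurable φ := measurable_const.indicator hs
    have hφb : ∃ C, ∀ x, |φ x| ≤ C := ⟨1, fun x => by
      by_cases h : x ∈ s <;> simp [hφ, Set.indicator_apply, h]⟩
    have key : ∀ h : (Fin M → ℝ) → ℝ,
        (∫ x in O, h x * φ x) = ∫ x in s, h x ∂(volume.restrict O) := by
      intro h
      rw [← integral_indicator hs]
      congr 1
      funext x
      by_cases hx : x ∈ s
      · simp [hφ, Set.indicator_of_mem hx]
      · simp [hφ, Set.indicator_of_notMem hx]
    have h1 := hv_weak φ hφm hφb
    have h2 := hgv_weak φ hφm hφb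
    simp only [key] at h1 h2
    have hvint_s : ∀ n, Integrable (v n) ((volume.restrict O).restrict s) :=
      fun n => Integrable.restrict (hv_int n)
    have hgvint_s : ∀ n, Integrable (fun x => g (v n x)) ((volume.restrict O).restrict s) :=
      fun n => Integrable.restrict (hgv_int n)
    have hvlim_s : Integrable vlim ((volume.restrict O).restrict s) :=
      Integrable.restrict hvlim_int
    have hle : ∀ n, A * (∫ x in s, v n x ∂(volume.restrict O))
        + B * ((volume.restrict O) s).toReal ≤ ∫ x in s, g (v n x) ∂(volume.restrict O) := by
      intro n
      have heq : ∫ x in s, (A * v n x + B) ∂(volume.restrict O)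
          = A * (∫ x in s, v n x ∂(volume.restrict O)) + B * ((volume.restrict O) s).toReal := by
        rw [integral_add ((hvint_s n).const_mul A) (integrable_const B),
          integral_const_mul, setIntegral_const, smul_eq_mul, Measure.real]
        ring
      rw [← heq]
      exact integral_mono (((hvint_s n).const_mul A).add (integrable_const B))
        (hgvint_s n) (fun x => hAB (v n x))
    have h3 : Tendsto (fun n => A * (∫ x in s, v n x ∂(volume.restrict O))
        + B * ((volume.restrict O) s).toReal) atTop
        (𝓝 (A * (∫ x in s, vlim x ∂(volume.restrict O)) + B * ((volume.restrict O) s).toReal)) :=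
      (h1.const_mul A).add_const _
    have hfinal := le_of_tendsto_of_tendsto' h3 h2 hle
    have heq2 : ∫ x in s, (A * vlim x + B) ∂(volume.restrict O)
        = A * (∫ x in s, vlim x ∂(volume.restrict O)) + B * ((volume.restrict O) s).toReal := by
      rw [integral_add (hvlim_s.const_mul A) (integrable_const B),
        integral_const_mul, setIntegral_const, smul_eq_mul, Measure.real]
      ring
    rw [heq2]
    exact hfinal
  choose a ha using fun q : ℚ => supp_line g hg_conv (q : ℝ)
  have hae : ∀ᵐ x ∂(volume.restrict O), ∀ q : ℚ, g q + a q * (vlim x - q) ≤ w x := by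
    rw [ae_all_iff]
    intro q
    have h := line_ae (a q) (g q - a q * q) (fun t => by
      have h := ha q t
      rw [mul_sub] at h
      linarith)
    filter_upwards [h] with x hx
    rw [mul_sub]
    linarith
  filter_upwards [hae] with x hx
  by_contra hcon
  push_neg at hcon
  obtain ⟨q, hq⟩ := sup_lines g hg_cont a ha (vlim x)
    (show (0:ℝ) < g (vlim x) - w x by linarith)
  have := hx q
  linarith
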